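/- arXiv:1211.0106 — 3 statements merged into one kernel-verified Lean document; each statement's English description precedes it below -/
import Mathlib

section
/- The set A = {(z,w) ∈ ℂ² : w ≠ 0, z = e^{1/w}} ∪ {(z,w) : w = 0} is not a (complex) analytic subset of ℂ². -/
open Complex Metric Filter Topology


/-- A subset `S` of an open set `U ⊆ ℂ²` is an analytic subset if it is locally the
common zero set of finitely many holomorphic functions. -/
def IsAnalyticSubset (U S : Set (ℂ × ℂ)) : Prop :=
  ∀ x ∈ U, ∃ V : Set (ℂ × ℂ), IsOpen V ∧ x ∈ V ∧ V ⊆ U ∧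
    ∃ (k : ℕ) (g : Fin k → (ℂ × ℂ) → ℂ),
      (∀ i, DifferentiableOn ℂ (g i) V) ∧
      S ∩ V = {y | y ∈ V ∧ ∀ i, g i y = 0}

/-- The set `A = {(z,w) : w ≠ 0, z = e^{1/w}} ∪ {w = 0}` is not an analytic subset
of `ℂ²`. -/
theorem stmt5 :
    ¬ IsAnalyticSubset Set.univ
      ({q : ℂ × ℂ | q.2 ≠ 0 ∧ q.1 = Complex.exp (1 / q.2)} ∪ {q : ℂ × ℂ | q.2 = 0}) := by
  intro h
  obtain ⟨V, hVo, hxV, -, k, g, hg, hset⟩ := h (0, 0) trivial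
  obtain ⟨r, hr, hball⟩ := Metric.isOpen_iff.mp hVo (0, 0) hxV
  have hz0 : ∀ i, ∀ y ∈ V, y.2 ≠ 0 → y.1 = Complex.exp (1 / y.2) → g i y = 0 := by
    intro i y hyV h1 h2
    have hy : y ∈ {y | y ∈ V ∧ ∀ i, g i y = 0} := by
      rw [← hset]; exact ⟨Or.inl ⟨h1, h2⟩, hyV⟩
    exact hy.2 i
  have hmem : ∀ z w : ℂ, z ∈ ball (0 : ℂ) r → w ∈ ball (0 : ℂ) r → (z, w) ∈ V := by
    intro z w hz hw
    exact hball (by rw [← ball_prod_same]; exact ⟨hz, hw⟩)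
  have hdiff : ∀ i (z : ℂ), z ∈ ball (0 : ℂ) r →
      AnalyticOnNhd ℂ (fun w => g i (z, w)) (ball (0 : ℂ) r) := by
    intro i z hz
    apply DifferentiableOn.analyticOnNhd _ isOpen_ball
    exact (hg i).comp ((differentiable_const z).prodMk differentiable_id).differentiableOn
      (fun w hw => hmem z w hz hw)
  have hdiff2 : ∀ i (w : ℂ), w ∈ ball (0 : ℂ) r →
      AnalyticOnNhd ℂ (fun z => g i (z, w)) (ball (0 : ℂ) r) := by
    intro i w hw
    apply DifferentiableOn.analyticOnNhd _ isOpen_ball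
    exact (hg i).comp (differentiable_id.prodMk (differentiable_const w)).differentiableOn
      (fun z hz => hmem z w hz hw)
  have key1 : ∀ i z, z ∈ ball (0 : ℂ) r → z ≠ 0 → ∀ w ∈ ball (0 : ℂ) r, g i (z, w) = 0 := by
    intro i z hz hzne
    have harg := Complex.neg_pi_lt_arg z
    have hpi := Real.pi_gt_three
    set c : ℕ → ℂ := fun n => Complex.log z + ((2 * Real.pi * (n + 1) : ℝ) : ℂ) * Complex.I with hc
    have him : ∀ n : ℕ, ((n : ℝ) + 1) ≤ (c n).im := by
      intro n
      have : (c n).im = Complex.arg z + 2 * Real.pi * (n + 1) := by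
        simp [hc, Complex.log_im]
      rw [this]
      have hn : (0 : ℝ) ≤ (n : ℝ) := Nat.cast_nonneg n
      nlinarith
    have hcne : ∀ n, c n ≠ 0 := by
      intro n hn
      have := him n
      rw [hn] at this
      simp at this
      have hn : (0 : ℝ) ≤ (n : ℝ) := Nat.cast_nonneg n
      linarith
    have hexp : ∀ n, Complex.exp (c n) = z := by
      intro n
      have h1 : c n = Complex.log z + (((n : ℤ) + 1 : ℤ) : ℂ) * (2 * (Real.pi : ℂ) * Complex.I) := by
        simp only [hc]; push_cast; ring
      rw [h1, Complex.exp_add, Complex.exp_log hzne, Complex.exp_int_mul_two_pi_mul_I, mul_one]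
    set u : ℕ → ℂ := fun n => (c n)⁻¹ with hu
    have hune : ∀ n, u n ≠ 0 := fun n => inv_ne_zero (hcne n)
    have hnorm : ∀ n, ‖u n‖ ≤ ((n : ℝ) + 1)⁻¹ := by
      intro n
      rw [hu]
      simp only [norm_inv]
      apply inv_anti₀
      · positivity
      · calc ((n : ℝ) + 1) ≤ (c n).im := him n
          _ ≤ |(c n).im| := le_abs_self _
          _ ≤ ‖c n‖ := Complex.abs_im_le_norm _
    have htend0 : Tendsto u atTop (𝓝 0) := by
      apply squeeze_zero_norm hnorm
      exact tendsto_one_div_add_atTop_nhds_zero_nat.congr (by intro n; rw [one_div])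
    have htend : Tendsto u atTop (𝓝[≠] (0 : ℂ)) :=
      tendsto_nhdsWithin_iff.mpr ⟨htend0, Eventually.of_forall hune⟩
    have hfreq : ∃ᶠ w in 𝓝[≠] (0 : ℂ), g i (z, w) = 0 := by
      apply htend.frequently
      apply Filter.Eventually.frequently
      filter_upwards [htend0 (Metric.ball_mem_nhds _ hr)] with n hn
      apply hz0 i (z, u n) (hmem z (u n) hz hn) (hune n)
      show z = Complex.exp (1 / u n)
      rw [hu]
      simp only [one_div, inv_inv]
      exact (hexp n).symm
    have := (hdiff i z hz).eqOn_zero_of_preconnected_of_frequently_eq_zero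
      (convex_ball (0 : ℂ) r).isPreconnected (mem_ball_self hr) hfreq
    intro w hw
    exact this hw
  have key2 : ∀ i, ∀ w ∈ ball (0 : ℂ) r, g i (0, w) = 0 := by
    intro i w hw
    have hfreq : ∃ᶠ z in 𝓝[≠] (0 : ℂ), g i (z, w) = 0 := by
      apply Filter.Eventually.frequently
      filter_upwards [nhdsWithin_le_nhds (isOpen_ball.mem_nhds (mem_ball_self hr)),
        self_mem_nhdsWithin] with z hz hz'
      exact key1 i z hz hz' w hw
    exact (hdiff2 i w hw).eqOn_zero_of_preconnected_of_frequently_eq_zero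
      (convex_ball (0 : ℂ) r).isPreconnected (mem_ball_self hr) hfreq (mem_ball_self hr)
  have hwr : ((r / 2 : ℝ) : ℂ) ∈ ball (0 : ℂ) r := by
    rw [mem_ball_zero_iff, Complex.norm_real, Real.norm_eq_abs, abs_of_pos (by linarith : (0:ℝ) < r / 2)]
    linarith
  have hp : ((0 : ℂ), ((r / 2 : ℝ) : ℂ)) ∈ {y | y ∈ V ∧ ∀ i, g i y = 0} :=
    ⟨hmem _ _ (mem_ball_self hr) hwr, fun i => key2 i _ hwr⟩
  rw [← hset] at hp
  rcases hp.1 with ⟨-, h2⟩ | h1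
  · exact (Complex.exp_ne_zero _) h2.symm
  · rw [Set.mem_setOf_eq, Complex.ofReal_eq_zero] at h1
    linarith
end

section
/- Let ν̄ : (0, r₀) → ℝ be a function and δ > 0 a constant such that for all 0 < r₁ < r₂ < r₀, ν̄(r₂) − ν̄(r₁) ≥ −(δ/r₁^{2p−1})(σ(r₂) − σ(r₁)) − δ(1/r₁^{2p} − 1/r₂^{2p}) r₂ σ(r₂), where σ(r) = r^{2p} ν̄(r). If ν̄ is differentiable, then (1+δr)^{4p} ν̄(r) is nondecreasing on (0, r₀') for some r₀' > 0; in particular ν̄(r) admits a (possibly infinite) limit as r → 0⁺. -/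
open Set Topology Filter

/-- Almost-monotonicity of the Lelong function: if `ν̄ : (0,r₀) → ℝ` (nonnegative,
differentiable) satisfies, with `σ(r) = r^{2p} ν̄(r)`, the inequality
`ν̄(r₂) − ν̄(r₁) ≥ −(δ/r₁^{2p−1})(σ(r₂) − σ(r₁)) − δ(1/r₁^{2p} − 1/r₂^{2p}) r₂ σ(r₂)`
for all `0 < r₁ < r₂ < r₀`, then `(1+δr)^{4p} ν̄(r)` is nondecreasing on `(0,r₀')`
for some `r₀' > 0`; in particular `ν̄(r)` has a limit as `r → 0⁺`. -/
theorem stmt8 (p : ℕ) (hp : 1 ≤ p) (r₀ δ : ℝ) (hr₀ : 0 < r₀) (hδ : 0 < δ)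
    (ν : ℝ → ℝ)
    (hnn : ∀ r ∈ Ioo (0:ℝ) r₀, 0 ≤ ν r)
    (hdiff : ∀ r ∈ Ioo (0:ℝ) r₀, DifferentiableAt ℝ ν r)
    (hineq : ∀ r₁ r₂ : ℝ, 0 < r₁ → r₁ < r₂ → r₂ < r₀ →
      -(δ / r₁ ^ (2 * p - 1)) * (r₂ ^ (2 * p) * ν r₂ - r₁ ^ (2 * p) * ν r₁)
        - δ * (1 / r₁ ^ (2 * p) - 1 / r₂ ^ (2 * p)) * (r₂ * (r₂ ^ (2 * p) * ν r₂))
      ≤ ν r₂ - ν r₁) :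
    (∃ r₀' > 0, MonotoneOn (fun r => (1 + δ * r) ^ (4 * p) * ν r) (Ioo (0:ℝ) r₀')) ∧
    ∃ L : ℝ, Tendsto ν (nhdsWithin 0 (Ioi (0:ℝ))) (nhds L) := by
  -- key derivative inequality
  have key : ∀ r ∈ Ioo (0:ℝ) r₀, 0 ≤ (1 + δ * r) * deriv ν r + 4 * p * δ * ν r := by
    intro r hr
    obtain ⟨hr0, hrr₀⟩ := id hr
    have hν : HasDerivAt ν (deriv ν r) r := (hdiff r hr).hasDerivAt
    set ν' := deriv ν r with hν'
    have hrne : r ≠ 0 := hr0.ne'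
    have hpne : r ^ (2 * p) ≠ 0 := pow_ne_zero _ hrne
    -- the auxiliary function
    set F : ℝ → ℝ := fun s =>
      (ν s + (δ / r ^ (2 * p - 1)) * (s ^ (2 * p) * ν s - r ^ (2 * p) * ν r))
        + δ * ((1 / r ^ (2 * p) - (s ^ (2 * p))⁻¹) * (s * (s ^ (2 * p) * ν s))) with hF
    have hσ : HasDerivAt (fun s => s ^ (2 * p) * ν s)
        ((2 * p : ℕ) * r ^ (2 * p - 1) * ν r + r ^ (2 * p) * ν') r :=
      (hasDerivAt_pow (2 * p) r).mul hν
    have hg : HasDerivAt (fun s => 1 / r ^ (2 * p) - (s ^ (2 * p))⁻¹)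
        (-(-((2 * p : ℕ) * r ^ (2 * p - 1)) / (r ^ (2 * p)) ^ 2)) r :=
      ((hasDerivAt_pow (2 * p) r).inv hpne).const_sub _
    have hh : HasDerivAt (fun s => s * (s ^ (2 * p) * ν s))
        (1 * (r ^ (2 * p) * ν r) + r * ((2 * p : ℕ) * r ^ (2 * p - 1) * ν r + r ^ (2 * p) * ν')) r :=
      (hasDerivAt_id' r).mul hσ
    set D : ℝ :=
      (ν' + (δ / r ^ (2 * p - 1)) * ((2 * p : ℕ) * r ^ (2 * p - 1) * ν r + r ^ (2 * p) * ν'))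
        + δ * ((-(-((2 * p : ℕ) * r ^ (2 * p - 1)) / (r ^ (2 * p)) ^ 2)) * (r * (r ^ (2 * p) * ν r))
          + (1 / r ^ (2 * p) - (r ^ (2 * p))⁻¹) *
            (1 * (r ^ (2 * p) * ν r) + r * ((2 * p : ℕ) * r ^ (2 * p - 1) * ν r + r ^ (2 * p) * ν'))) with hD
    have hFd : HasDerivAt F D r :=
      (hν.add ((hσ.sub_const _).const_mul _)).add ((hg.mul hh).const_mul δ)
    -- F s ≥ F r for s ∈ (r, r₀)
    have hFr : F r = ν r := by simp [hF]
    have hmin : ∀ s ∈ Ioo r r₀, F r ≤ F s := by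
      intro s hs
      have h := hineq r s hr0 hs.1 hs.2
      rw [hFr]
      simp only [hF, one_div] at h ⊢
      linarith
    -- derivative is nonnegative
    have hD0 : 0 ≤ D := by
      have hslope := hasDerivAt_iff_tendsto_slope.1 hFd
      have hslope' : Tendsto (slope F r) (𝓝[>] r) (𝓝 D) :=
        hslope.mono_left (nhdsWithin_mono _ (fun x hx => ne_of_gt hx))
      refine ge_of_tendsto hslope' ?_
      filter_upwards [Ioo_mem_nhdsGT_of_mem ⟨le_refl r, hrr₀⟩] with s hs
      have : F r ≤ F s := hmin s hs
      have hsr : 0 < s - r := sub_pos.2 hs.1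
      rw [slope_def_field]
      exact div_nonneg (by linarith) hsr.le
    -- identify D
    have hDval : D = (1 + δ * r) * ν' + 4 * p * δ * ν r := by
      have hpow : r ^ (2 * p) = r ^ (2 * p - 1) * r := by
        rw [← pow_succ]; congr 1; omega
      have hpne1 : r ^ (2 * p - 1) ≠ 0 := pow_ne_zero _ hrne
      rw [hD]
      simp only [one_div, sub_self, zero_mul, add_zero]
      rw [hpow]
      field_simp
      push_cast
      ring
    linarith [hD0, hDval.symm.le]
  set G : ℝ → ℝ := fun r => (1 + δ * r) ^ (4 * p) * ν r with hG
  have hGd : ∀ r ∈ Ioo (0:ℝ) r₀, HasDerivAt G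
      ((1 + δ * r) ^ (4 * p - 1) * ((1 + δ * r) * deriv ν r + 4 * p * δ * ν r)) r := by
    intro r hr
    have h1 : HasDerivAt (fun r : ℝ => 1 + δ * r) δ r := by
      simpa using ((hasDerivAt_id' r).const_mul δ).const_add 1
    have := (h1.pow (4 * p)).mul (hdiff r hr).hasDerivAt
    refine this.congr_deriv (Eq.symm ?_); simp only [Pi.pow_apply]
    have hpow4 : (1 + δ * r) ^ (4 * p) = (1 + δ * r) ^ (4 * p - 1) * (1 + δ * r) := by
      rw [← pow_succ]; congr 1; omega
    rw [hpow4]; push_cast; ring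
  have hmono : MonotoneOn G (Ioo (0:ℝ) r₀) := by
    apply monotoneOn_of_deriv_nonneg (convex_Ioo _ _)
    · exact fun r hr => ((hGd r hr).differentiableAt.continuousAt).continuousWithinAt
    · rw [interior_Ioo]
      exact fun r hr => (hGd r hr).differentiableAt.differentiableWithinAt
    · rw [interior_Ioo]
      intro r hr
      rw [(hGd r hr).deriv]
      have h1 : (0:ℝ) ≤ 1 + δ * r := by nlinarith [hr.1]
      exact mul_nonneg (pow_nonneg h1 _) (key r hr)
  refine ⟨⟨r₀, hr₀, hmono⟩, ?_⟩
  have hne : (Ioo (0:ℝ) r₀).Nonempty := ⟨r₀ / 2, by constructor <;> linarith⟩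
  have hbdd : BddBelow (G '' Ioo (0:ℝ) r₀) := by
    refine ⟨0, ?_⟩
    rintro y ⟨x, hx, rfl⟩
    exact mul_nonneg (pow_nonneg (by nlinarith [hx.1]) _) (hnn x hx)
  have hGt := hmono.tendsto_nhdsWithin_Ioo_right hne hbdd
  have hc : ContinuousAt (fun r : ℝ => ((1 + δ * r) ^ (4 * p))⁻¹) 0 := by
    apply ContinuousAt.inv₀
    · fun_prop
    · norm_num
  have hden : Tendsto (fun r : ℝ => ((1 + δ * r) ^ (4 * p))⁻¹) (𝓝[>] (0:ℝ)) (𝓝 1) := by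
    have := hc.tendsto.mono_left (nhdsWithin_le_nhds : 𝓝[>] (0:ℝ) ≤ 𝓝 0)
    simpa using this
  refine ⟨sInf (G '' Ioo 0 r₀) * 1, ?_⟩
  refine Tendsto.congr' ?_ (hGt.mul hden)
  filter_upwards [self_mem_nhdsWithin] with r hr
  have hr0 : (0:ℝ) < r := hr
  have h1 : (0:ℝ) < 1 + δ * r := by nlinarith
  simp only [hG]
  field_simp
end

section
/- Let ν̄, g : (0,r₀) → ℝ be differentiable with g nonnegative, nondecreasing, g(r) → 0 as r → 0⁺, and suppose (1+δr) ν̄'(r) + 4pδ ν̄(r) + g'(r) ≥ 0 on (0,r₀) for constants δ > 0 and integer p ≥ 1. Then the function r ↦ (1+δr)^{4p} ν̄(r) + (1+δr)^{4p−1} g(r) is nondecreasing near 0, and ν̄(r) admits a limit as r → 0⁺ equal to lim_{r→0⁺} (1+δr)^{4p} ν̄(r). -/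
open Set Topology Filter

/-- ODE-comparison lemma: if `ν̄, g` are differentiable on `(0,r₀)`, `g ≥ 0`
nondecreasing with `g(r) → 0` as `r → 0⁺`, `ν̄ ≥ 0` (bounded below), and
`(1+δr) ν̄'(r) + 4pδ ν̄(r) + g'(r) ≥ 0`, then
`r ↦ (1+δr)^{4p} ν̄(r) + (1+δr)^{4p−1} g(r)` is nondecreasing near `0`, and `ν̄(r)`
has a limit as `r → 0⁺`, equal to `lim_{r→0⁺} (1+δr)^{4p} ν̄(r)`. -/
theorem stmt9 (p : ℕ) (hp : 1 ≤ p) (r₀ δ : ℝ) (hr₀ : 0 < r₀) (hδ : 0 < δ)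
    (ν g : ℝ → ℝ)
    (hν : ∀ r ∈ Ioo (0:ℝ) r₀, DifferentiableAt ℝ ν r)
    (hg : ∀ r ∈ Ioo (0:ℝ) r₀, DifferentiableAt ℝ g r)
    (hgnn : ∀ r ∈ Ioo (0:ℝ) r₀, 0 ≤ g r)
    (hgmono : MonotoneOn g (Ioo (0:ℝ) r₀))
    (hg0 : Tendsto g (nhdsWithin 0 (Ioi (0:ℝ))) (nhds 0))
    (hνnn : ∀ r ∈ Ioo (0:ℝ) r₀, 0 ≤ ν r)
    (hineq : ∀ r ∈ Ioo (0:ℝ) r₀,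
      0 ≤ (1 + δ * r) * deriv ν r + 4 * p * δ * ν r + deriv g r) :
    (∃ r₁ > 0, MonotoneOn
      (fun r => (1 + δ * r) ^ (4 * p) * ν r + (1 + δ * r) ^ (4 * p - 1) * g r)
      (Ioo (0:ℝ) r₁)) ∧
    ∃ L : ℝ, Tendsto ν (nhdsWithin 0 (Ioi (0:ℝ))) (nhds L) ∧
      Tendsto (fun r => (1 + δ * r) ^ (4 * p) * ν r)
        (nhdsWithin 0 (Ioi (0:ℝ))) (nhds L) := by
  set n := 4 * p with hn
  have hn4 : 4 ≤ n := by omega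
  set m := n - 1 with hm
  set k := n - 2 with hk
  have hnm : n = m + 1 := by omega
  have hmk : m = k + 1 := by omega
  set F : ℝ → ℝ := fun r => (1 + δ * r) ^ n * ν r + (1 + δ * r) ^ m * g r with hF
  have hupos : ∀ r ∈ Ioo (0:ℝ) r₀, (0:ℝ) < 1 + δ * r := fun r hr => by nlinarith [hr.1]
  -- derivative of F
  have hder : ∀ r ∈ Ioo (0:ℝ) r₀, HasDerivAt F
      ((n * (1 + δ * r) ^ m * δ) * ν r + (1 + δ * r) ^ n * deriv ν r
        + (m * (1 + δ * r) ^ k * δ) * g r + (1 + δ * r) ^ m * deriv g r) r := by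
    intro r hr
    have hu : HasDerivAt (fun r : ℝ => 1 + δ * r) δ r := by
      simpa using ((hasDerivAt_id r).const_mul δ).const_add 1
    have h1 : HasDerivAt (fun r : ℝ => (1 + δ * r) ^ n) (n * (1 + δ * r) ^ (n - 1) * δ) r :=
      hu.pow n
    have h2 : HasDerivAt (fun r : ℝ => (1 + δ * r) ^ m) (m * (1 + δ * r) ^ (m - 1) * δ) r :=
      hu.pow m
    have h3 := (h1.mul ((hν r hr).hasDerivAt)).add (h2.mul ((hg r hr).hasDerivAt))
    have e1 : n - 1 = m := rfl
    have e2 : m - 1 = k := by omega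
    rw [e1] at h3; rw [e2] at h3
    exact h3.congr_deriv (by ring)
  -- nonnegativity of derivative
  have hdernn : ∀ r ∈ Ioo (0:ℝ) r₀,
      0 ≤ (n * (1 + δ * r) ^ m * δ) * ν r + (1 + δ * r) ^ n * deriv ν r
        + (m * (1 + δ * r) ^ k * δ) * g r + (1 + δ * r) ^ m * deriv g r := by
    intro r hr
    have hu := hupos r hr
    have h1 : (0:ℝ) ≤ (1 + δ * r) ^ m *
        ((1 + δ * r) * deriv ν r + 4 * p * δ * ν r + deriv g r) :=
      mul_nonneg (pow_nonneg hu.le m) (hineq r hr)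
    have h2 : (0:ℝ) ≤ (m * (1 + δ * r) ^ k * δ) * g r := by
      have := hgnn r hr
      positivity
    have key : (n * (1 + δ * r) ^ m * δ) * ν r + (1 + δ * r) ^ n * deriv ν r
        + (m * (1 + δ * r) ^ k * δ) * g r + (1 + δ * r) ^ m * deriv g r
      = (1 + δ * r) ^ m * ((1 + δ * r) * deriv ν r + 4 * p * δ * ν r + deriv g r)
        + (m * (1 + δ * r) ^ k * δ) * g r := by
      rw [hnm, pow_succ]
      push_cast
      have hmp : (m:ℝ) = 4 * p - 1 := by
        have : m + 1 = 4 * p := by omega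
        have := congrArg (fun x : ℕ => (x:ℝ)) this
        push_cast at this
        linarith
      rw [hmp]; ring
    rw [key]
    linarith
  -- monotonicity of F
  have hFmono : MonotoneOn F (Ioo (0:ℝ) r₀) := by
    apply monotoneOn_of_deriv_nonneg (convex_Ioo _ _)
    · intro r hr
      exact ((hder r hr).differentiableAt.continuousAt).continuousWithinAt
    · intro r hr
      rw [interior_Ioo] at hr
      exact (hder r hr).differentiableAt.differentiableWithinAt
    · intro r hr
      rw [interior_Ioo] at hr
      rw [(hder r hr).deriv]
      exact hdernn r hr
  refine ⟨⟨r₀, hr₀, hFmono⟩, ?_⟩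
  -- the limit
  have hne : (Ioo (0:ℝ) r₀).Nonempty := nonempty_Ioo.2 hr₀
  have hFnn : ∀ r ∈ Ioo (0:ℝ) r₀, 0 ≤ F r := by
    intro r hr
    have hu := hupos r hr
    have := hνnn r hr; have := hgnn r hr
    have h1 : (0:ℝ) ≤ (1 + δ * r) ^ n * ν r := mul_nonneg (pow_nonneg hu.le n) ‹_›
    have h2 : (0:ℝ) ≤ (1 + δ * r) ^ m * g r := mul_nonneg (pow_nonneg hu.le m) ‹_›
    simpa [hF] using add_nonneg h1 h2
  have hbdd : BddBelow (F '' Ioo (0:ℝ) r₀) := by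
    refine ⟨0, ?_⟩
    rintro _ ⟨r, hr, rfl⟩
    exact hFnn r hr
  set L := sInf (F '' Ioo (0:ℝ) r₀) with hL
  have hFlim : Tendsto F (𝓝[>] (0:ℝ)) (𝓝 L) :=
    MonotoneOn.tendsto_nhdsWithin_Ioo_right hne hFmono hbdd
  -- (1+δr)^j → 1 as r → 0⁺
  have hpow : ∀ j : ℕ, Tendsto (fun r : ℝ => (1 + δ * r) ^ j) (𝓝[>] (0:ℝ)) (𝓝 1) := by
    intro j
    have hc : Tendsto (fun r : ℝ => (1 + δ * r) ^ j) (𝓝 (0:ℝ)) (𝓝 ((1 + δ * 0) ^ j)) := by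
      exact ((continuous_const.add (continuous_const.mul continuous_id)).pow j).tendsto _
    simpa using hc.mono_left nhdsWithin_le_nhds
  have hgterm : Tendsto (fun r : ℝ => (1 + δ * r) ^ m * g r) (𝓝[>] (0:ℝ)) (𝓝 0) := by
    have := (hpow m).mul hg0
    simpa using this
  have hνterm : Tendsto (fun r : ℝ => (1 + δ * r) ^ n * ν r) (𝓝[>] (0:ℝ)) (𝓝 L) := by
    have := hFlim.sub hgterm
    simpa [hF] using this
  refine ⟨L, ?_, by simpa [hn] using hνterm⟩
  have hdiv : Tendsto (fun r : ℝ => ((1 + δ * r) ^ n * ν r) / (1 + δ * r) ^ n)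
      (𝓝[>] (0:ℝ)) (𝓝 (L / 1)) :=
    hνterm.div (hpow n) one_ne_zero
  have heq : ∀ᶠ r in 𝓝[>] (0:ℝ), ((1 + δ * r) ^ n * ν r) / (1 + δ * r) ^ n = ν r := by
    filter_upwards [self_mem_nhdsWithin] with r hr
    have hu : (0:ℝ) < 1 + δ * r := by
      have : (0:ℝ) < r := hr
      nlinarith
    field_simp
  simpa using hdiv.congr' heq
end
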